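/- Let C be a braided monoidal category, S an invertible object, and M an object of C. Let m_S ∈ End_C(M) be the unique endomorphism such that the monodromy satisfies 𝓜_{S,M} = id_S ⊗ m_S (it exists and is unique because f ↦ id_S ⊗ f : End(M) → End(S ⊗ M) is bijective for invertible S). Then: (i) m_S is an isomorphism; (ii) for every n ≥ 1, writing S^{⊗n} = S ⊗ (S ⊗ (⋯ ⊗ S)) for the n-fold right-nested tensor power, the monodromy of S^{⊗n} with M is 𝓜_{S^{⊗n},M} = id_{S^{⊗n}} ⊗ (m_S)^n; (iii) for the dual S* one has 𝓜_{S*,M} = id_{S*} ⊗ (m_S)^{-1}. -/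

import Mathlib

open CategoryTheory MonoidalCategory

/-- The `n`-fold right-nested tensor power `S ⊗ (S ⊗ (⋯ ⊗ S))` of an object `S`
(with `S^{⊗0} = 𝟙` by convention). -/
def tensorPow {C : Type*} [Category C] [MonoidalCategory C] (S : C) : ℕ → C
  | 0 => 𝟙_ C
  | 1 => S
  | (n + 2) => S ⊗ tensorPow S (n + 1)

/-- The `n`-fold composition power `f ≫ f ≫ ⋯ ≫ f` of an endomorphism `f`. -/
def compPow {C : Type*} [Category C] {M : C} (f : M ⟶ M) : ℕ → (M ⟶ M)
  | 0 => 𝟙 M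
  | (n + 1) => f ≫ compPow f n

namespace StmtTwoAux

variable {C : Type*} [Category C] [MonoidalCategory C]

noncomputable def retr (S Sd : C) [ExactPairing S Sd] [IsIso (ε_ S Sd)] {N : C}
    (h : S ⊗ N ⟶ S ⊗ N) : N ⟶ N :=
  (λ_ N).inv ≫ inv (ε_ S Sd) ▷ N ≫ (α_ Sd S N).hom ≫ Sd ◁ h ≫ (α_ Sd S N).inv ≫
    (ε_ S Sd) ▷ N ≫ (λ_ N).hom

lemma retr_whiskerLeft (S Sd : C) [ExactPairing S Sd] [IsIso (ε_ S Sd)] {N : C}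
    (f : N ⟶ N) : retr S Sd (S ◁ f) = f := by
  rw [retr, associator_inv_naturality_right_assoc, Iso.hom_inv_id_assoc,
    ← whisker_exchange_assoc]
  simp

lemma retr_comp (S Sd : C) [ExactPairing S Sd] [IsIso (ε_ S Sd)] {N : C}
    (h h' : S ⊗ N ⟶ S ⊗ N) : retr S Sd (h ≫ h') = retr S Sd h ≫ retr S Sd h' := by
  simp [retr, ← comp_whiskerRight_assoc]

lemma retr_id (S Sd : C) [ExactPairing S Sd] [IsIso (ε_ S Sd)] (N : C) :
    retr S Sd (𝟙 (S ⊗ N)) = 𝟙 N := by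
  simp [retr]

lemma monodromy_tensor' [BraidedCategory C] (X Y M : C) (f : M ⟶ M)
    (hX : (β_ X M).hom ≫ (β_ M X).hom = X ◁ f) :
    (β_ (X ⊗ Y) M).hom ≫ (β_ M (X ⊗ Y)).hom =
      (α_ X Y M).hom ≫ X ◁ (((β_ Y M).hom ≫ (β_ M Y).hom) ≫ Y ◁ f) ≫ (α_ X Y M).inv := by
  calc (β_ (X ⊗ Y) M).hom ≫ (β_ M (X ⊗ Y)).hom
      = (α_ X Y M).hom ≫ X ◁ (β_ Y M).hom ≫ (α_ X M Y).inv ≫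
        ((β_ X M).hom ≫ (β_ M X).hom) ▷ Y ≫ (α_ X M Y).hom ≫
        X ◁ (β_ M Y).hom ≫ (α_ X Y M).inv := by
        simp [BraidedCategory.braiding_tensor_left_hom, BraidedCategory.braiding_tensor_right_hom]
    _ = (α_ X Y M).hom ≫ X ◁ (((β_ Y M).hom ≫ (β_ M Y).hom) ≫ Y ◁ f) ≫ (α_ X Y M).inv := by
        rw [hX]
        simp only [MonoidalCategory.whiskerLeft_comp, Category.assoc]
        congr 1
        rw [← whisker_assoc_symm_assoc]
        simp only [← MonoidalCategory.whiskerLeft_comp_assoc,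
          BraidedCategory.braiding_naturality_left]

lemma monodromy_tensor [BraidedCategory C] (X Y M : C) (f g : M ⟶ M)
    (hX : (β_ X M).hom ≫ (β_ M X).hom = X ◁ f)
    (hY : (β_ Y M).hom ≫ (β_ M Y).hom = Y ◁ g) :
    (β_ (X ⊗ Y) M).hom ≫ (β_ M (X ⊗ Y)).hom = (X ⊗ Y) ◁ (g ≫ f) := by
  rw [monodromy_tensor' X Y M f hX, hY, ← MonoidalCategory.whiskerLeft_comp,
    tensor_whiskerLeft_symm]
  simp

end StmtTwoAux

lemma compPow_succ' {C : Type*} [Category C] {M : C} (f : M ⟶ M) (n : ℕ) :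
    compPow f (n + 1) = compPow f n ≫ f := by
  induction n with
  | zero => simp [compPow]
  | succ n ih =>
    show f ≫ compPow f (n + 1) = (f ≫ compPow f n) ≫ f
    rw [ih, Category.assoc]

/-- **Monodromy of powers of an invertible object.**
Let `C` be a braided monoidal category, `S` an invertible object (with two-sided dual
`Sd`, evaluation and coevaluation isomorphisms), `M` an object, and let `m_S` be the
(unique) endomorphism of `M` with monodromy `𝓜_{S,M} = id_S ⊗ m_S`.  Then
(i) `m_S` is an isomorphism; (ii) `𝓜_{S^{⊗n},M} = id_{S^{⊗n}} ⊗ m_S^n` for all `n ≥ 1`;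
(iii) `𝓜_{S*,M} = id_{S*} ⊗ m_S^{-1}`. -/
theorem stmt_2 {C : Type*} [Category C] [MonoidalCategory C] [BraidedCategory C]
    (S Sd : C) [ExactPairing S Sd]
    (hev : IsIso (ε_ S Sd)) (hcoev : IsIso (η_ S Sd))
    (M : C) (mS : M ⟶ M)
    (hmS : (β_ S M).hom ≫ (β_ M S).hom = S ◁ mS) :
    IsIso mS ∧
    (∀ n : ℕ, 1 ≤ n →
      (β_ (tensorPow S n) M).hom ≫ (β_ M (tensorPow S n)).hom =
        tensorPow S n ◁ compPow mS n) ∧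
    (∃ mSinv : M ⟶ M, mS ≫ mSinv = 𝟙 M ∧ mSinv ≫ mS = 𝟙 M ∧
      (β_ Sd M).hom ≫ (β_ M Sd).hom = Sd ◁ mSinv) := by
  haveI := hev
  haveI := hcoev
  -- part (i): explicit inverse of mS
  set mS' : M ⟶ M := StmtTwoAux.retr S Sd ((β_ M S).inv ≫ (β_ S M).inv) with hmS'
  have h1 : mS ≫ mS' = 𝟙 M := by
    rw [hmS', ← StmtTwoAux.retr_whiskerLeft S Sd mS, ← StmtTwoAux.retr_comp, ← hmS]
    rw [show ((β_ S M).hom ≫ (β_ M S).hom) ≫ (β_ M S).inv ≫ (β_ S M).inv = 𝟙 _ by simp]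
    exact StmtTwoAux.retr_id S Sd M
  have h2 : mS' ≫ mS = 𝟙 M := by
    rw [hmS', ← StmtTwoAux.retr_whiskerLeft S Sd mS, ← StmtTwoAux.retr_comp, ← hmS]
    rw [show ((β_ M S).inv ≫ (β_ S M).inv) ≫ (β_ S M).hom ≫ (β_ M S).hom = 𝟙 _ by simp]
    exact StmtTwoAux.retr_id S Sd M
  refine ⟨⟨mS', h1, h2⟩, ?_, ?_⟩
  · -- part (ii)
    intro n hn
    induction n with
    | zero => omega
    | succ n ih =>
      match n, ih with
      | 0, _ => simpa [tensorPow, compPow] using hmS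
      | (m + 1), ih =>
        have hprev := ih (by omega)
        show (β_ (S ⊗ tensorPow S (m + 1)) M).hom ≫ (β_ M (S ⊗ tensorPow S (m + 1))).hom =
          (S ⊗ tensorPow S (m + 1)) ◁ compPow mS (m + 2)
        rw [compPow_succ']
        exact StmtTwoAux.monodromy_tensor S (tensorPow S (m + 1)) M mS
          (compPow mS (m + 1)) hmS hprev
  · -- part (iii)
    -- monodromy of S ⊗ Sd with M is the identity
    have hunit : (β_ (S ⊗ Sd) M).hom ≫ (β_ M (S ⊗ Sd)).hom = 𝟙 _ := by
      have key : (η_ S Sd) ▷ M ≫ (β_ (S ⊗ Sd) M).hom ≫ (β_ M (S ⊗ Sd)).hom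
          = (η_ S Sd) ▷ M := by
        rw [BraidedCategory.braiding_naturality_left_assoc,
          BraidedCategory.braiding_naturality_right]
        simp [braiding_tensorUnit_left, braiding_tensorUnit_right]
      rw [← cancel_epi ((η_ S Sd) ▷ M), key, Category.comp_id]
    -- decompose the monodromy of (S ⊗ Sd)
    have hdec : (β_ (S ⊗ Sd) M).hom ≫ (β_ M (S ⊗ Sd)).hom =
        (α_ S Sd M).hom ≫ S ◁ (((β_ Sd M).hom ≫ (β_ M Sd).hom) ≫ Sd ◁ mS) ≫
          (α_ S Sd M).inv :=
      StmtTwoAux.monodromy_tensor' S Sd M mS hmS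
    have hkey : ((β_ Sd M).hom ≫ (β_ M Sd).hom) ≫ Sd ◁ mS = 𝟙 (Sd ⊗ M) := by
      have : S ◁ (((β_ Sd M).hom ≫ (β_ M Sd).hom) ≫ Sd ◁ mS) = S ◁ (𝟙 (Sd ⊗ M)) := by
        rw [MonoidalCategory.whiskerLeft_id]
        rw [hunit] at hdec
        rw [← cancel_epi (α_ S Sd M).hom, ← cancel_mono (α_ S Sd M).inv]
        simpa using hdec.symm
      have := congrArg (StmtTwoAux.retr S Sd) this
      rwa [StmtTwoAux.retr_whiskerLeft, StmtTwoAux.retr_whiskerLeft] at this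
    refine ⟨mS', h1, h2, ?_⟩
    calc (β_ Sd M).hom ≫ (β_ M Sd).hom
        = ((β_ Sd M).hom ≫ (β_ M Sd).hom) ≫ Sd ◁ (mS ≫ mS') := by
          rw [h1]; simp
      _ = (((β_ Sd M).hom ≫ (β_ M Sd).hom) ≫ Sd ◁ mS) ≫ Sd ◁ mS' := by
          simp [MonoidalCategory.whiskerLeft_comp]
      _ = Sd ◁ mS' := by rw [hkey, Category.id_comp]
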